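/- Let k be a field, let C be a neural code on n neurons, let q be the map duplicating the first neuron, q(σ) = ι(σ) ∪ {Fin.last n} if (0 : Fin n) ∈ σ and q(σ) = ι(σ) otherwise, and let C' = {q(σ) | σ ∈ C}. Then the ring homomorphism MvPolynomial (Fin n) k → MvPolynomial (Fin (n+1)) k determined by X i ↦ X (Fin.castSucc i) maps the Stanley–Reisner ideal I_{Δ(C)} into I_{Δ(C')}, and the induced ring homomorphism (MvPolynomial (Fin n) k)/I_{Δ(C)} → (MvPolynomial (Fin (n+1)) k)/I_{Δ(C')} is injective. -/

import Mathlib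

/-- The simplicial complex of a neural code. -/
def simComp {V : Type*} (C : Set (Finset V)) : Set (Finset V) := {α | ∃ β ∈ C, α ⊆ β}

/-- The map sending `α ⊆ Fin n` to its image in `Fin (n+1)` under `Fin.castSucc`. -/
def iota {n : ℕ} (α : Finset (Fin n)) : Finset (Fin (n+1)) := α.image Fin.castSucc

/-- Duplicating the first neuron. -/
def dup {n : ℕ} [NeZero n] (σ : Finset (Fin n)) : Finset (Fin (n+1)) :=
  if (0 : Fin n) ∈ σ then iota σ ∪ {Fin.last n} else iota σ

/-- The Stanley–Reisner ideal of a family of finite subsets of `Fin m`. -/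
noncomputable def SRideal (k : Type*) [Field k] {m : ℕ} (K : Set (Finset (Fin m))) :
    Ideal (MvPolynomial (Fin m) k) :=
  Ideal.span {p | ∃ τ : Finset (Fin m), τ ∉ K ∧ p = ∏ i ∈ τ, MvPolynomial.X i}

/-- Retraction sending `castSucc i ↦ i` and `last ↦ 0`. -/
def piRetr (n : ℕ) [NeZero n] : Fin (n+1) → Fin n :=
  fun j => if h : (j : ℕ) < n then ⟨j, h⟩ else 0

lemma piRetr_castSucc {n : ℕ} [NeZero n] (i : Fin n) : piRetr n (Fin.castSucc i) = i := by
  simp only [piRetr, Fin.coe_castSucc, i.isLt, dif_pos]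

lemma piRetr_last {n : ℕ} [NeZero n] : piRetr n (Fin.last n) = 0 := by
  simp [piRetr]

lemma lemA {n : ℕ} [NeZero n] (C : Set (Finset (Fin n))) (τ : Finset (Fin n))
    (h : τ ∉ simComp C) : iota τ ∉ simComp (dup '' C) := by
  rintro ⟨β, ⟨σ, hσ, rfl⟩, hsub⟩
  refine h ⟨σ, hσ, fun i hi => ?_⟩
  have hmem : Fin.castSucc i ∈ dup σ := hsub (Finset.mem_image_of_mem _ hi)
  have hiotaσ : Fin.castSucc i ∈ iota σ := by
    unfold dup at hmem
    split at hmem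
    · rcases Finset.mem_union.1 hmem with h1 | h1
      · exact h1
      · exact absurd (Finset.mem_singleton.1 h1) (Fin.ne_last_of_lt (Fin.castSucc_lt_last i))
    · exact hmem
  obtain ⟨j, hj, hji⟩ := Finset.mem_image.1 hiotaσ
  rwa [← Fin.castSucc_injective n hji]

lemma lemB {n : ℕ} [NeZero n] (C : Set (Finset (Fin n))) (τ' : Finset (Fin (n+1)))
    (h : τ' ∉ simComp (dup '' C)) : τ'.image (piRetr n) ∉ simComp C := by
  rintro ⟨σ, hσ, hsub⟩
  refine h ⟨dup σ, ⟨σ, hσ, rfl⟩, fun j hj => ?_⟩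
  have hpj : piRetr n j ∈ σ := hsub (Finset.mem_image_of_mem _ hj)
  rcases Fin.eq_castSucc_or_eq_last j with ⟨i, rfl⟩ | rfl
  · rw [piRetr_castSucc] at hpj
    have : Fin.castSucc i ∈ iota σ := Finset.mem_image_of_mem _ hpj
    unfold dup
    split
    · exact Finset.mem_union_left _ this
    · exact this
  · rw [piRetr_last] at hpj
    rw [dup, if_pos hpj]
    exact Finset.mem_union_right _ (Finset.mem_singleton_self _)

theorem stmt_15 (k : Type*) [Field k] (n : ℕ) [NeZero n] (C : Set (Finset (Fin n)))
    (C' : Set (Finset (Fin (n+1)))) (hC' : C' = dup '' C) :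
    ∃ h : SRideal k (simComp C) ≤
        Ideal.comap
          ((MvPolynomial.rename (Fin.castSucc (n := n))).toRingHom :
            MvPolynomial (Fin n) k →+* MvPolynomial (Fin (n+1)) k)
          (SRideal k (simComp C')),
      Function.Injective
        (Ideal.quotientMap (SRideal k (simComp C'))
          ((MvPolynomial.rename (Fin.castSucc (n := n))).toRingHom) h) := by
  subst hC'
  have h : SRideal k (simComp C) ≤
      Ideal.comap ((MvPolynomial.rename (Fin.castSucc (n := n))).toRingHom)
        (SRideal k (simComp (dup '' C))) := by
    rw [SRideal, Ideal.span_le]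
    rintro _ ⟨τ, hτ, rfl⟩
    simp only [SetLike.mem_coe, Ideal.mem_comap, AlgHom.toRingHom_eq_coe,
      RingHom.coe_coe]
    have : (MvPolynomial.rename (Fin.castSucc (n := n))) (∏ i ∈ τ, MvPolynomial.X i)
        = ∏ j ∈ iota τ, MvPolynomial.X (R := k) j := by
      rw [map_prod, iota, Finset.prod_image (fun a _ b _ h => Fin.castSucc_injective n h)]
      simp [MvPolynomial.rename_X]
    rw [this]
    exact Ideal.subset_span ⟨iota τ, lemA C τ hτ, rfl⟩
  have hcomap : Ideal.comap ((MvPolynomial.rename (Fin.castSucc (n := n))).toRingHom)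
      (SRideal k (simComp (dup '' C))) ≤ SRideal k (simComp C) := by
    intro p hp
    have hmem : (MvPolynomial.rename (Fin.castSucc (n := n))) p ∈
        SRideal k (simComp (dup '' C)) := hp
    have hmap : Ideal.map ((MvPolynomial.rename (piRetr n)).toRingHom :
          MvPolynomial (Fin (n+1)) k →+* MvPolynomial (Fin n) k)
        (SRideal k (simComp (dup '' C))) ≤ SRideal k (simComp C) := by
      rw [SRideal, Ideal.map_span, Ideal.span_le]
      rintro _ ⟨_, ⟨τ', hτ', rfl⟩, rfl⟩
      show (MvPolynomial.rename (piRetr n)) (∏ i ∈ τ', MvPolynomial.X i) ∈ _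
      rw [map_prod]
      simp only [MvPolynomial.rename_X]
      have hgen : (∏ j ∈ τ'.image (piRetr n), MvPolynomial.X (R := k) j)
          ∈ SRideal k (simComp C) :=
        Ideal.subset_span ⟨τ'.image (piRetr n), lemB C τ' hτ', rfl⟩
      have hdvd : (∏ j ∈ τ'.image (piRetr n), MvPolynomial.X (R := k) j) ∣
          ∏ i ∈ τ', MvPolynomial.X (R := k) (piRetr n i) := by
        rw [Finset.prod_comp (fun j => MvPolynomial.X (R := k) j) (piRetr n)]
        refine Finset.prod_dvd_prod_of_dvd _ _ fun j hj => ?_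
        refine dvd_pow_self _ ?_
        obtain ⟨i, hi⟩ := Finset.mem_image.1 hj
        exact Finset.card_ne_zero_of_mem (Finset.mem_filter.2 ⟨hi.1, hi.2⟩)
      obtain ⟨c, hc⟩ := hdvd
      rw [hc]
      exact Ideal.mul_mem_right _ _ hgen
    have hcomp : (MvPolynomial.rename (piRetr n))
        ((MvPolynomial.rename (Fin.castSucc (n := n))) p) = p := by
      rw [MvPolynomial.rename_rename]
      have : (piRetr n) ∘ (Fin.castSucc (n := n)) = id := by
        funext i; exact piRetr_castSucc i
      rw [this, MvPolynomial.rename_id, AlgHom.id_apply]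
    have := hmap (Ideal.mem_map_of_mem _ hmem)
    rwa [← hcomp]
  exact ⟨h, Ideal.quotientMap_injective' hcomap⟩
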